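/- Albert's criterion: for a Hermitian matrix H = [[A, B], [B*, C]], H is positive semidefinite if and only if A is positive semidefinite, the generalized Schur complement H/A = C − B* A⁺ B is positive semidefinite, and R(B) ⊆ R(A). -/

import Mathlib

open Matrix ComplexOrder

/-- \`Ap\` satisfies the four Penrose equations for \`A\`, i.e. it is the Moore-Penrose
inverse of \`A\`. -/
def IsMoorePenrose {m n : Type*} [Fintype m] [Fintype n]
    (A : Matrix m n ℂ) (Ap : Matrix n m ℂ) : Prop :=
  A * Ap * A = A ∧ Ap * A * Ap = Ap ∧ (A * Ap)ᴴ = A * Ap ∧ (Ap * A)ᴴ = Ap * A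

/-- Uniqueness of the Moore-Penrose inverse. -/
lemma mp_unique {m n : Type*} [Fintype m] [Fintype n]
    (A : Matrix m n ℂ) {P Q : Matrix n m ℂ}
    (hP : IsMoorePenrose A P) (hQ : IsMoorePenrose A Q) : P = Q := by
  obtain ⟨p1, p2, p3, p4⟩ := hP
  obtain ⟨q1, q2, q3, q4⟩ := hQ
  have hA : A * P = A * Q := by
    have h1 : A * P = Pᴴ * Aᴴ := by rw [← conjTranspose_mul]; exact p3.symm
    have h2 : Aᴴ = Aᴴ * (A * Q) := by
      conv_lhs => rw [← q1, conjTranspose_mul, q3]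
    calc A * P = Pᴴ * Aᴴ := h1
    _ = Pᴴ * (Aᴴ * (A * Q)) := by rw [← h2]
    _ = (Pᴴ * Aᴴ) * (A * Q) := (Matrix.mul_assoc _ _ _).symm
    _ = (A * P) * (A * Q) := by rw [← h1]
    _ = A * P * A * Q := (Matrix.mul_assoc _ _ _).symm
    _ = A * Q := by rw [p1]
  have hB : P * A = Q * A := by
    have h1 : P * A = Aᴴ * Pᴴ := by rw [← conjTranspose_mul]; exact p4.symm
    have h2 : Aᴴ = (Q * A) * Aᴴ := by
      conv_lhs => rw [← q1, Matrix.mul_assoc, conjTranspose_mul, q4]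
    calc P * A = Aᴴ * Pᴴ := h1
    _ = ((Q * A) * Aᴴ) * Pᴴ := by rw [← h2]
    _ = (Q * A) * (Aᴴ * Pᴴ) := Matrix.mul_assoc _ _ _
    _ = (Q * A) * (P * A) := by rw [← h1]
    _ = Q * A * P * A := (Matrix.mul_assoc _ _ _).symm
    _ = Q * (A * P * A) := by
        rw [Matrix.mul_assoc Q A P, Matrix.mul_assoc Q (A * P) A]
    _ = Q * A := by rw [p1]
  calc P = P * A * P := p2.symm
  _ = Q * A * P := by rw [hB]
  _ = Q * (A * P) := Matrix.mul_assoc _ _ _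
  _ = Q * (A * Q) := by rw [hA]
  _ = Q * A * Q := (Matrix.mul_assoc _ _ _).symm
  _ = Q := q2

/-- The MP inverse of a Hermitian matrix is Hermitian. -/
lemma mp_herm {n : Type*} [Fintype n] {A Ap : Matrix n n ℂ}
    (hA : A.IsHermitian) (hAp : IsMoorePenrose A Ap) : Apᴴ = Ap := by
  obtain ⟨p1, p2, p3, p4⟩ := hAp
  have hA' : Aᴴ = A := hA
  have h1 : IsMoorePenrose A Apᴴ := by
    refine ⟨?_, ?_, ?_, ?_⟩
    · calc A * Apᴴ * A = (Aᴴ * Ap * Aᴴ)ᴴ := by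
            simp [conjTranspose_mul, Matrix.mul_assoc]
      _ = (A * Ap * A)ᴴ := by rw [hA']
      _ = A := by rw [p1, hA']
    · calc Apᴴ * A * Apᴴ = (Ap * Aᴴ * Ap)ᴴ := by
            simp [conjTranspose_mul, Matrix.mul_assoc]
      _ = Apᴴ := by rw [hA', p2]
    · have e : A * Apᴴ = Ap * A := by
        calc A * Apᴴ = (Ap * Aᴴ)ᴴ := by simp [conjTranspose_mul]
        _ = (Ap * A)ᴴ := by rw [hA']
        _ = Ap * A := p4
      rw [e]; exact p4
    · have e : Apᴴ * A = A * Ap := by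
        calc Apᴴ * A = (Aᴴ * Ap)ᴴ := by simp [conjTranspose_mul]
        _ = (A * Ap)ᴴ := by rw [hA']
        _ = A * Ap := p3
      rw [e]; exact p3
  exact mp_unique A h1 ⟨p1, p2, p3, p4⟩

theorem albert_criterion {k l : ℕ}
    (A : Matrix (Fin k) (Fin k) ℂ) (B : Matrix (Fin k) (Fin l) ℂ)
    (C : Matrix (Fin l) (Fin l) ℂ) (Ap : Matrix (Fin k) (Fin k) ℂ)
    (hA : A.IsHermitian) (hC : C.IsHermitian)
    (hAp : IsMoorePenrose A Ap) :
    (Matrix.fromBlocks A B Bᴴ C).PosSemidef ↔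
      A.PosSemidef ∧ (C - Bᴴ * Ap * B).PosSemidef ∧
        LinearMap.range B.mulVecLin ≤ LinearMap.range A.mulVecLin := by
  have hApH : Apᴴ = Ap := mp_herm hA hAp
  obtain ⟨p1, p2, p3, p4⟩ := hAp
  have hA' : Aᴴ = A := hA
  -- the range condition is equivalent to A * Ap * B = B
  have hrange : (LinearMap.range B.mulVecLin ≤ LinearMap.range A.mulVecLin) ↔
      A * Ap * B = B := by
    constructor
    · intro h
      have key : ∀ v, (A * Ap * B) *ᵥ v = B *ᵥ v := by
        intro v
        have hmem : B *ᵥ v ∈ LinearMap.range A.mulVecLin :=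
          h ⟨v, by simp [mulVecLin_apply]⟩
        obtain ⟨y, hy⟩ := hmem
        simp only [mulVecLin_apply] at hy
        calc (A * Ap * B) *ᵥ v = (A * Ap) *ᵥ (B *ᵥ v) := by
              rw [← mulVec_mulVec]
        _ = (A * Ap) *ᵥ (A *ᵥ y) := by rw [hy]
        _ = (A * Ap * A) *ᵥ y := by rw [mulVec_mulVec]
        _ = A *ᵥ y := by rw [p1]
        _ = B *ᵥ v := hy
      ext i j
      have := congrFun (key (Pi.single j 1)) i
      simpa [mulVec_single_one] using this
    · intro h x hx
      obtain ⟨v, hv⟩ := hx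
      refine ⟨(Ap * B) *ᵥ v, ?_⟩
      simp only [mulVecLin_apply] at hv ⊢
      rw [mulVec_mulVec, ← Matrix.mul_assoc, h, hv]
  -- the key equivalence under the compatibility condition
  have key : A * Ap * B = B →
      ((fromBlocks A B Bᴴ C).PosSemidef ↔
        A.PosSemidef ∧ (C - Bᴴ * Ap * B).PosSemidef) := by
    intro hAB
    have hBhA : Bᴴ * Ap * A = Bᴴ := by
      have := congrArg conjTranspose hAB
      rwa [conjTranspose_mul, conjTranspose_mul, hApH, hA', ← Matrix.mul_assoc] at this
    have step1 : (fromBlocks 1 0 (-(Bᴴ * Ap)) 1 : Matrix (Fin k ⊕ Fin l) (Fin k ⊕ Fin l) ℂ) *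
        fromBlocks A B Bᴴ C = fromBlocks A B 0 (C - Bᴴ * Ap * B) := by
      rw [fromBlocks_multiply]
      simp only [Matrix.one_mul, Matrix.zero_mul, Matrix.neg_mul, add_zero, zero_add]
      rw [hBhA, neg_add_cancel, neg_add_eq_sub]
    have step2 : (fromBlocks A B 0 (C - Bᴴ * Ap * B) : Matrix (Fin k ⊕ Fin l) (Fin k ⊕ Fin l) ℂ) *
        fromBlocks 1 (-(Ap * B)) 0 1 = fromBlocks A 0 0 (C - Bᴴ * Ap * B) := by
      rw [fromBlocks_multiply]
      simp only [Matrix.mul_one, Matrix.mul_zero, Matrix.zero_mul, add_zero, zero_add,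
        Matrix.mul_neg, neg_zero]
      rw [show A * (Ap * B) = B from by rw [← Matrix.mul_assoc, hAB], neg_add_cancel]
    have step1' : (fromBlocks 1 0 (Bᴴ * Ap) 1 : Matrix (Fin k ⊕ Fin l) (Fin k ⊕ Fin l) ℂ) *
        fromBlocks A 0 0 (C - Bᴴ * Ap * B) =
        fromBlocks A 0 Bᴴ (C - Bᴴ * Ap * B) := by
      rw [fromBlocks_multiply]
      simp only [Matrix.one_mul, Matrix.zero_mul, Matrix.mul_zero, add_zero, zero_add]
      rw [hBhA]
    have step2' : (fromBlocks A 0 Bᴴ (C - Bᴴ * Ap * B) : Matrix (Fin k ⊕ Fin l) (Fin k ⊕ Fin l) ℂ) *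
        fromBlocks 1 (Ap * B) 0 1 = fromBlocks A B Bᴴ C := by
      rw [fromBlocks_multiply]
      simp only [Matrix.mul_one, Matrix.mul_zero, Matrix.zero_mul, add_zero, zero_add]
      rw [show A * (Ap * B) = B from by rw [← Matrix.mul_assoc, hAB],
        show Bᴴ * (Ap * B) + (C - Bᴴ * Ap * B) = C from by
          rw [← Matrix.mul_assoc]; abel]
    -- conjugate transposes of the unipotent matrices
    have hXH : (fromBlocks 1 (Ap * B) 0 1 : Matrix (Fin k ⊕ Fin l) (Fin k ⊕ Fin l) ℂ)ᴴ =
        fromBlocks 1 0 (Bᴴ * Ap) 1 := by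
      rw [fromBlocks_conjTranspose]
      simp [conjTranspose_mul, hApH]
    have hYH : (fromBlocks 1 (-(Ap * B)) 0 1 : Matrix (Fin k ⊕ Fin l) (Fin k ⊕ Fin l) ℂ)ᴴ =
        fromBlocks 1 0 (-(Bᴴ * Ap)) 1 := by
      rw [fromBlocks_conjTranspose]
      simp [conjTranspose_mul, hApH]
    constructor
    · intro hH
      have hD : (fromBlocks 1 (-(Ap * B)) 0 1 : Matrix (Fin k ⊕ Fin l) (Fin k ⊕ Fin l) ℂ)ᴴ *
          fromBlocks A B Bᴴ C * fromBlocks 1 (-(Ap * B)) 0 1 =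
          fromBlocks A 0 0 (C - Bᴴ * Ap * B) := by
        rw [hYH, step1, step2]
      have hpsd : (fromBlocks A 0 0 (C - Bᴴ * Ap * B)).PosSemidef := by
        rw [← hD]
        exact hH.conjTranspose_mul_mul_same _
      constructor
      · have := hpsd.submatrix (Sum.inl : Fin k → Fin k ⊕ Fin l)
        have he : (fromBlocks A 0 0 (C - Bᴴ * Ap * B)).submatrix
            (Sum.inl : Fin k → Fin k ⊕ Fin l) Sum.inl = A := by
          ext i j; simp [fromBlocks]
        rwa [he] at this
      · have := hpsd.submatrix (Sum.inr : Fin l → Fin k ⊕ Fin l)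
        have he : (fromBlocks A 0 0 (C - Bᴴ * Ap * B)).submatrix
            (Sum.inr : Fin l → Fin k ⊕ Fin l) Sum.inr = C - Bᴴ * Ap * B := by
          ext i j; simp [fromBlocks]
        rwa [he] at this
    · rintro ⟨hApsd, hS⟩
      have hdiag : (fromBlocks A 0 0 (C - Bᴴ * Ap * B)).PosSemidef := by
        rw [posSemidef_iff_dotProduct_mulVec]
        constructor
        · rw [isHermitian_fromBlocks_iff]
          exact ⟨hApsd.1, by simp, by simp, hS.1⟩
        · intro x
          have hx : x = Sum.elim (x ∘ Sum.inl) (x ∘ Sum.inr) := (Sum.elim_comp_inl_inr x).symm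
          rw [hx, fromBlocks_mulVec]
          have hstar : star (Sum.elim (x ∘ Sum.inl) (x ∘ Sum.inr)) =
              Sum.elim (star (x ∘ Sum.inl)) (star (x ∘ Sum.inr)) := by
            funext i; cases i <;> simp
          rw [hstar, sumElim_dotProduct_sumElim]
          simp only [zero_mulVec, add_zero, zero_add]
          exact add_nonneg (hApsd.dotProduct_mulVec_nonneg _) (hS.dotProduct_mulVec_nonneg _)
      have hH : (fromBlocks 1 (Ap * B) 0 1 : Matrix (Fin k ⊕ Fin l) (Fin k ⊕ Fin l) ℂ)ᴴ *
          fromBlocks A 0 0 (C - Bᴴ * Ap * B) * fromBlocks 1 (Ap * B) 0 1 =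
          fromBlocks A B Bᴴ C := by
        rw [hXH, step1', step2']
      rw [← hH]
      exact hdiag.conjTranspose_mul_mul_same _
  constructor
  · intro hH
    -- kernel of A is contained in kernel of Bᴴ
    have hker : ∀ x, A *ᵥ x = 0 → Bᴴ *ᵥ x = 0 := by
      intro x hx
      have h0 : star (Sum.elim x (0 : Fin l → ℂ)) ⬝ᵥ
          (fromBlocks A B Bᴴ C) *ᵥ Sum.elim x 0 = 0 := by
        rw [fromBlocks_mulVec]
        have hstar : star (Sum.elim x (0 : Fin l → ℂ)) =
            Sum.elim (star x) (0 : Fin l → ℂ) := by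
          funext i; cases i <;> simp
        rw [hstar, sumElim_dotProduct_sumElim]
        simp [hx]
      have := (hH.dotProduct_mulVec_zero_iff (Sum.elim x 0)).mp h0
      rw [fromBlocks_mulVec] at this
      have h2 := congrFun this
      funext j
      have := h2 (Sum.inr j)
      simpa [hx] using this
    have hAB : A * Ap * B = B := by
      have hproj : A * (1 - A * Ap) = 0 := by
        rw [Matrix.mul_sub, Matrix.mul_one]
        have h9 : A * (A * Ap) = A := by
          calc A * (A * Ap) = ((A * Ap)ᴴ * Aᴴ)ᴴ := by
                rw [← conjTranspose_mul, conjTranspose_conjTranspose]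
          _ = ((A * Ap) * A)ᴴ := by rw [p3, hA']
          _ = Aᴴ := by rw [p1]
          _ = A := hA'
        rw [h9, sub_self]
      have hzero : Bᴴ * (1 - A * Ap) = 0 := by
        ext i j
        have h1 : Bᴴ *ᵥ ((1 - A * Ap) *ᵥ Pi.single j 1) = 0 := by
          apply hker
          rw [mulVec_mulVec, hproj, zero_mulVec]
        have h3 : (Bᴴ * (1 - A * Ap)) *ᵥ Pi.single j 1 = 0 := by
          rw [← mulVec_mulVec]; exact h1
        have := congrFun h3 i
        simpa [mulVec_single_one] using this
      have h4 := congrArg conjTranspose hzero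
      rw [conjTranspose_mul, conjTranspose_sub, conjTranspose_one, p3,
        conjTranspose_conjTranspose, Matrix.sub_mul, Matrix.one_mul,
        conjTranspose_zero] at h4
      have h5 := sub_eq_zero.mp h4
      exact h5.symm
    obtain ⟨h6, h7⟩ := (key hAB).mp hH
    exact ⟨h6, h7, hrange.mpr hAB⟩
  · rintro ⟨hApsd, hS, hr⟩
    exact (key (hrange.mp hr)).mpr ⟨hApsd, hS⟩
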